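/- Let G be a group acting by homeomorphisms on a compact Hausdorff space X and suppose that the set M = {x ∈ X : for all μ ∈ P(X), δ_x lies in the weak-* closure of the G-orbit of μ} is nonempty. Then M is the unique minimal subset of X for the action of G. -/
import Mathlib


open MeasureTheory Pointwise

/-- The pushforward action of `g : G` on Borel probability measures on `X`. -/
noncomputable def pushPM {G X : Type*} [Group G] [TopologicalSpace X]
    [MeasurableSpace X] [BorelSpace X] [MulAction G X] [ContinuousConstSMul G X]
    (g : G) (μ : ProbabilityMeasure X) : ProbabilityMeasure X :=
  μ.map (f := fun x => g • x) (continuous_const_smul g).measurable.aemeasurable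

/-- The Dirac probability measure at a point. -/
noncomputable def diracPM {X : Type*} [TopologicalSpace X] [MeasurableSpace X]
    (x : X) : ProbabilityMeasure X :=
  ⟨Measure.dirac x, inferInstance⟩

/-- A minimal set for the action: nonempty, closed, invariant, and containing no proper
nonempty closed invariant subset. -/
def IsMinimalSet (G : Type*) {X : Type*} [Group G] [TopologicalSpace X] [MulAction G X]
    (M : Set X) : Prop :=
  M.Nonempty ∧ IsClosed M ∧ (∀ g : G, g • M ⊆ M) ∧
    ∀ N : Set X, N ⊆ M → N.Nonempty → IsClosed N → (∀ g : G, g • N ⊆ N) → N = M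

set_option linter.unusedSectionVars false

section
variable {G X : Type*} [Group G] [TopologicalSpace X] [CompactSpace X] [T2Space X]
  [MeasurableSpace X] [BorelSpace X] [MulAction G X] [ContinuousConstSMul G X]

lemma diracPM_eq : (diracPM : X → ProbabilityMeasure X) = diracProba := rfl

lemma continuous_diracPM : Continuous (diracPM : X → ProbabilityMeasure X) := by
  rw [diracPM_eq]; exact continuous_diracProba

lemma continuous_pushPM (g : G) : Continuous (pushPM (X := X) g) :=
  ProbabilityMeasure.continuous_map (continuous_const_smul g)

lemma pushPM_diracPM (g : G) (x : X) : pushPM g (diracPM x) = diracPM (g • x) := by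
  apply Subtype.ext
  show (Measure.dirac x).map (fun x => g • x) = Measure.dirac (g • x)
  rw [Measure.map_dirac' (continuous_const_smul g).measurable]

lemma pushPM_pushPM (g h : G) (μ : ProbabilityMeasure X) :
    pushPM g (pushPM h μ) = pushPM (g * h) μ := by
  apply Subtype.ext
  show ((μ.toMeasure.map (fun x => h • x)).map (fun x => g • x))
      = μ.toMeasure.map (fun x => (g * h) • x)
  rw [Measure.map_map (continuous_const_smul g).measurable (continuous_const_smul h).measurable]
  congr 1
  ext x
  simp [mul_smul]

end

section main
variable {G X : Type*} [Group G] [TopologicalSpace X] [CompactSpace X] [T2Space X]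
  [MeasurableSpace X] [BorelSpace X] [MulAction G X] [ContinuousConstSMul G X]

lemma testAgainstNN_diracPM (z : X) (f : BoundedContinuousFunction X NNReal) :
    (diracPM z).toFiniteMeasure.testAgainstNN f = f z := by
  have : (diracPM z).toFiniteMeasure.toMeasure = Measure.dirac z := rfl
  simp [FiniteMeasure.testAgainstNN, this,
    lintegral_dirac' z (measurable_coe_nnreal_ennreal_iff.mpr f.continuous.measurable)]

/-- Key: any point of M lies in the closure of every orbit. -/
lemma mem_closure_orbit_of_memM {x : X}
    (hx : ∀ μ : ProbabilityMeasure X,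
      diracPM x ∈ closure {ν | ∃ g : G, ν = pushPM g μ}) (y : X) :
    x ∈ closure (MulAction.orbit G y) := by
  by_contra hxK
  obtain ⟨f, hfx, hfK⟩ := CompletelyRegularSpace.exists_BCNN isClosed_closure hxK
  have hcont := ProbabilityMeasure.continuous_testAgainstNN_eval (Ω := X) f
  have hCcl : IsClosed {ν : ProbabilityMeasure X | ν.toFiniteMeasure.testAgainstNN f = 0} :=
    isClosed_singleton.preimage hcont
  have hsub : {ν : ProbabilityMeasure X | ∃ g : G, ν = pushPM g (diracPM y)}
      ⊆ {ν : ProbabilityMeasure X | ν.toFiniteMeasure.testAgainstNN f = 0} := by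
    rintro _ ⟨g, rfl⟩
    show (pushPM g (diracPM y)).toFiniteMeasure.testAgainstNN f = 0
    rw [pushPM_diracPM, testAgainstNN_diracPM]
    exact hfK _ (subset_closure (MulAction.mem_orbit y g))
  have h0 := closure_minimal hsub hCcl (hx (diracPM y))
  rw [Set.mem_setOf_eq, testAgainstNN_diracPM, hfx] at h0
  exact one_ne_zero h0

lemma theMain
    (hne : {x : X | ∀ μ : ProbabilityMeasure X,
        diracPM x ∈ closure {ν | ∃ g : G, ν = pushPM g μ}}.Nonempty) :
    IsMinimalSet G {x : X | ∀ μ : ProbabilityMeasure X,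
        diracPM x ∈ closure {ν | ∃ g : G, ν = pushPM g μ}} ∧
    ∀ M : Set X, IsMinimalSet G M →
      M = {x : X | ∀ μ : ProbabilityMeasure X,
        diracPM x ∈ closure {ν | ∃ g : G, ν = pushPM g μ}} := by
  set Mset := {x : X | ∀ μ : ProbabilityMeasure X,
      diracPM x ∈ closure {ν | ∃ g : G, ν = pushPM g μ}} with hM
  -- closedness
  have hclosed : IsClosed Mset := by
    have : Mset = ⋂ μ : ProbabilityMeasure X,
        diracPM ⁻¹' closure {ν | ∃ g : G, ν = pushPM g μ} := by
      ext x; simp [Mset]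
    rw [this]
    exact isClosed_iInter fun μ => isClosed_closure.preimage continuous_diracPM
  -- invariance
  have hinv : ∀ g : G, g • Mset ⊆ Mset := by
    rintro g x ⟨x₀, hx₀, rfl⟩
    intro μ
    rw [← pushPM_diracPM]
    have horb : pushPM g '' {ν | ∃ h : G, ν = pushPM h μ}
        ⊆ {ν | ∃ h : G, ν = pushPM h μ} := by
      rintro ν ⟨ν₀, ⟨h, rfl⟩, rfl⟩
      exact ⟨g * h, pushPM_pushPM g h μ⟩
    have := (continuous_pushPM g).continuousOn.image_closure (s := {ν | ∃ h : G, ν = pushPM h μ})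
    exact closure_minimal (horb.trans subset_closure) isClosed_closure
      (this (Set.mem_image_of_mem _ (hx₀ μ)))
  -- minimality
  have hmin : ∀ N : Set X, N ⊆ Mset → N.Nonempty → IsClosed N → (∀ g : G, g • N ⊆ N) → N = Mset := by
    intro N hNM ⟨y, hy⟩ hNcl hNinv
    refine Set.Subset.antisymm hNM fun x hx => ?_
    have hxy : x ∈ closure (MulAction.orbit G y) := mem_closure_orbit_of_memM hx y
    have horbN : MulAction.orbit G y ⊆ N := by
      rintro _ ⟨g, rfl⟩
      exact hNinv g ⟨y, hy, rfl⟩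
    exact closure_minimal horbN hNcl hxy
  refine ⟨⟨hne, hclosed, hinv, hmin⟩, ?_⟩
  rintro M ⟨⟨y, hy⟩, hMcl, hMinv, hMmin⟩
  have hsub : Mset ⊆ M := by
    intro x hx
    have horbM : MulAction.orbit G y ⊆ M := by
      rintro _ ⟨g, rfl⟩
      exact hMinv g ⟨y, hy, rfl⟩
    exact closure_minimal horbM hMcl (mem_closure_orbit_of_memM hx y)
  exact (hMmin Mset hsub hne hclosed hinv).symm

end main

/-- If the set `M = {x | ∀ μ ∈ P(X), δ_x ∈ closure (Orb_G μ)}` is nonempty, then it is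
the unique minimal subset of the action of `G` on the compact Hausdorff space `X`. -/
theorem unique_minimal_of_strong_proximality_set
    {G X : Type*} [Group G] [TopologicalSpace X] [CompactSpace X] [T2Space X]
    [MeasurableSpace X] [BorelSpace X] [MulAction G X] [ContinuousConstSMul G X]
    (hne : {x : X | ∀ μ : ProbabilityMeasure X,
        diracPM x ∈ closure {ν | ∃ g : G, ν = pushPM g μ}}.Nonempty) :
    IsMinimalSet G {x : X | ∀ μ : ProbabilityMeasure X,
        diracPM x ∈ closure {ν | ∃ g : G, ν = pushPM g μ}} ∧
    ∀ M : Set X, IsMinimalSet G M →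
      M = {x : X | ∀ μ : ProbabilityMeasure X,
        diracPM x ∈ closure {ν | ∃ g : G, ν = pushPM g μ}} :=
  theMain hne
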